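/- For every μ > 0 there exist a C¹ function ψ : [0,+∞) × (0,1) → [0,1] and a function b : (0,1) → ℝ with 0 < b(z) < z for every z ∈ (0,1), such that: (1) ψ(y,z) = 1 whenever 0 ≤ y ≤ b(z), and ψ(y,z) = 0 whenever y ≥ z; (2) |∂ψ/∂y (y,z)| ≤ μ/y for all y > 0 and z ∈ (0,1); (3) |∂ψ/∂z (y,z)| ≤ 4 + μ/z for all y ≥ 0 and z ∈ (0,1). -/

import Mathlib

open Set intervalIntegral

/-- Lemma 4.1 of the paper (without definability): for every `μ > 0` there is a `C¹`
bump function `ψ : [0,∞) × (0,1) → [0,1]` (i.e. extending to a `C¹` function on an open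
neighborhood `U` of `[0,∞) × (0,1)` in `ℝ²`) and a function `b` with `0 < b z < z`, such that
`ψ (y, z) = 1` for `0 ≤ y ≤ b z`, `ψ (y, z) = 0` for `y ≥ z`,
`|∂ψ/∂y (y,z)| ≤ μ / y` for `y > 0`, and `|∂ψ/∂z (y,z)| ≤ 4 + μ / z`. -/

noncomputable def kk (t : ℝ) : ℝ := 6 * max 0 (t * (1 - t))

lemma kk_cont : Continuous kk :=
  continuous_const.mul (continuous_const.max (by fun_prop))

lemma kk_nonneg (t : ℝ) : 0 ≤ kk t := by
  have : (0:ℝ) ≤ max 0 (t * (1 - t)) := le_max_left _ _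
  unfold kk; linarith

lemma kk_le (t : ℝ) : kk t ≤ 3 / 2 := by
  unfold kk
  rcases max_cases 0 (t * (1 - t)) with ⟨h, _⟩ | ⟨h, _⟩
  · rw [h]; norm_num
  · rw [h]; nlinarith [sq_nonneg (t - 1/2)]

lemma kk_eq_zero_of_nonpos {t : ℝ} (ht : t ≤ 0) : kk t = 0 := by
  have : t * (1 - t) ≤ 0 := mul_nonpos_of_nonpos_of_nonneg ht (by linarith)
  unfold kk; rw [max_eq_left this, mul_zero]

lemma kk_eq_zero_of_one_le {t : ℝ} (ht : 1 ≤ t) : kk t = 0 := by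
  have : t * (1 - t) ≤ 0 := mul_nonpos_of_nonneg_of_nonpos (by linarith) (by linarith)
  unfold kk; rw [max_eq_left this, mul_zero]

noncomputable def ss (x : ℝ) : ℝ := ∫ t in (0:ℝ)..x, kk t

lemma ss_hasDerivAt (x : ℝ) : HasDerivAt ss (kk x) x :=
  (kk_cont.integral_hasStrictDerivAt 0 x).hasDerivAt

lemma ss_contDiff : ContDiff ℝ 1 ss := by
  rw [contDiff_one_iff_deriv]
  constructor
  · exact fun x => (ss_hasDerivAt x).differentiableAt
  · have : deriv ss = kk := funext fun x => (ss_hasDerivAt x).deriv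
    rw [this]; exact kk_cont

lemma ss_eq_zero {x : ℝ} (hx : x ≤ 0) : ss x = 0 := by
  unfold ss
  rw [integral_symm]
  have : EqOn kk (fun _ => (0:ℝ)) (uIcc x 0) := by
    intro t ht
    rw [uIcc_of_le hx] at ht
    exact kk_eq_zero_of_nonpos ht.2
  rw [integral_congr this, integral_const]
  simp

lemma ss_eq_one {x : ℝ} (hx : 1 ≤ x) : ss x = 1 := by
  unfold ss
  have h1 : ∫ t in (0:ℝ)..1, kk t = 1 := by
    have : EqOn kk (fun t => 6 * t - 6 * t ^ 2) (uIcc (0:ℝ) 1) := by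
      intro t ht
      rw [uIcc_of_le zero_le_one] at ht
      have : max 0 (t * (1 - t)) = t * (1 - t) :=
        max_eq_right (mul_nonneg ht.1 (by linarith [ht.2]))
      unfold kk; rw [this]; ring
    rw [integral_congr this]
    have i1 : IntervalIntegrable (fun t : ℝ => 6 * t) MeasureTheory.volume 0 1 := by
      apply Continuous.intervalIntegrable; fun_prop
    have i2 : IntervalIntegrable (fun t : ℝ => 6 * t ^ 2) MeasureTheory.volume 0 1 := by
      apply Continuous.intervalIntegrable; fun_prop
    rw [integral_sub i1 i2, integral_const_mul, integral_const_mul, integral_id, integral_pow]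
    norm_num
  have h2 : ∫ t in (1:ℝ)..x, kk t = 0 := by
    have : EqOn kk (fun _ => (0:ℝ)) (uIcc 1 x) := by
      intro t ht
      rw [uIcc_of_le hx] at ht
      exact kk_eq_zero_of_one_le ht.1
    rw [integral_congr this, integral_const]; simp
  have := integral_add_adjacent_intervals (a := (0:ℝ)) (b := 1) (c := x)
    (kk_cont.intervalIntegrable (μ := MeasureTheory.volume) _ _) (kk_cont.intervalIntegrable (μ := MeasureTheory.volume) _ _)
  rw [← this, h1, h2]; norm_num

lemma ss_mem (x : ℝ) : ss x ∈ Icc (0:ℝ) 1 := by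
  constructor
  · rcases le_or_gt x 0 with h | h
    · rw [ss_eq_zero h]
    · exact integral_nonneg h.le (fun t _ => kk_nonneg t)
  · rcases le_or_gt 1 x with h | h
    · rw [ss_eq_one h]
    · have hadd := integral_add_adjacent_intervals (a := (0:ℝ)) (b := x) (c := 1)
        (kk_cont.intervalIntegrable (μ := MeasureTheory.volume) _ _) (kk_cont.intervalIntegrable (μ := MeasureTheory.volume) _ _)
      have h2 : 0 ≤ ∫ t in x..(1:ℝ), kk t := integral_nonneg h.le (fun t _ => kk_nonneg t)
      have : ss x + ∫ t in x..(1:ℝ), kk t = 1 := by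
        unfold ss; rw [hadd]; exact ss_eq_one le_rfl
      linarith

theorem exists_bump_function (μ : ℝ) (hμ : 0 < μ) :
    ∃ (ψ : ℝ × ℝ → ℝ) (b : ℝ → ℝ) (U : Set (ℝ × ℝ)),
      IsOpen U ∧ (Ici (0:ℝ) ×ˢ Ioo (0:ℝ) 1) ⊆ U ∧
      ContDiffOn ℝ 1 ψ U ∧
      (∀ y ∈ Ici (0:ℝ), ∀ z ∈ Ioo (0:ℝ) 1, ψ (y, z) ∈ Icc (0:ℝ) 1) ∧
      (∀ z ∈ Ioo (0:ℝ) 1, 0 < b z ∧ b z < z) ∧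
      (∀ z ∈ Ioo (0:ℝ) 1, ∀ y, 0 ≤ y → y ≤ b z → ψ (y, z) = 1) ∧
      (∀ z ∈ Ioo (0:ℝ) 1, ∀ y, z ≤ y → ψ (y, z) = 0) ∧
      (∀ z ∈ Ioo (0:ℝ) 1, ∀ y, 0 < y → |deriv (fun t => ψ (t, z)) y| ≤ μ / y) ∧
      (∀ z ∈ Ioo (0:ℝ) 1, ∀ y, 0 ≤ y → |deriv (fun t => ψ (y, t)) z| ≤ 4 + μ / z) := by
  set δ : ℝ := Real.exp (-(3/μ)) / 2 with hδdef
  have hδ0 : 0 < δ := by positivity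
  have hδ1 : δ < 1 := by
    have h1 : Real.exp (-(3/μ)) < 1 := by
      rw [← Real.exp_zero]
      exact Real.exp_lt_exp.2 (by nlinarith [div_pos (by norm_num : (0:ℝ) < 3) hμ])
    rw [hδdef]; linarith
  have hμ3 : (0:ℝ) < μ / 3 := by positivity
  refine ⟨fun p => ss ((Real.log p.2 - Real.log (p.1 + δ * p.2)) * (μ / 3)),
    fun z => δ * z,
    {p : ℝ × ℝ | 0 < p.2} ∩ {p : ℝ × ℝ | p.2 < 1} ∩ {p : ℝ × ℝ | 0 < p.1 + δ * p.2},
    ?_, ?_, ?_, ?_, ?_, ?_, ?_, ?_, ?_⟩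
  · exact ((isOpen_lt continuous_const continuous_snd).inter
      (isOpen_lt continuous_snd continuous_const)).inter
      (isOpen_lt continuous_const (continuous_fst.add (continuous_const.mul continuous_snd)))
  · rintro ⟨y, z⟩ ⟨hy, hz0, hz1⟩
    exact ⟨⟨hz0, hz1⟩, by simp only [mem_setOf_eq]; nlinarith [mem_Ici.1 hy]⟩
  · rintro ⟨y, z⟩ ⟨⟨hz0, hz1⟩, hb⟩
    simp only [mem_setOf_eq] at hz0 hz1 hb
    apply ContDiffAt.contDiffWithinAt
    have c1 : ContDiffAt ℝ 1 (fun p : ℝ × ℝ => Real.log p.2) (y, z) :=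
      (Real.contDiffAt_log.2 (ne_of_gt hz0)).comp (y, z) contDiffAt_snd
    have c2 : ContDiffAt ℝ 1 (fun p : ℝ × ℝ => Real.log (p.1 + δ * p.2)) (y, z) :=
      (Real.contDiffAt_log.2 (ne_of_gt hb)).comp (y, z)
        (contDiffAt_fst.add (contDiffAt_const.mul contDiffAt_snd))
    exact (ss_contDiff.contDiffAt).comp (y, z) ((c1.sub c2).mul contDiffAt_const)
  · intro y _ z _
    exact ss_mem _
  · rintro z ⟨hz0, hz1⟩
    exact ⟨mul_pos hδ0 hz0, by show δ * z < z; nlinarith [mul_pos (sub_pos.2 hδ1) hz0]⟩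
  · rintro z ⟨hz0, hz1⟩ y hy0 hyb
    show ss ((Real.log z - Real.log (y + δ * z)) * (μ / 3)) = 1
    apply ss_eq_one
    have hx : 0 < y + δ * z := by nlinarith
    have h1 : y + δ * z ≤ Real.exp (-(3/μ)) * z := by rw [hδdef] at hyb ⊢; nlinarith
    have h2 : Real.log (y + δ * z) ≤ Real.log (Real.exp (-(3/μ)) * z) :=
      (Real.log_le_log_iff hx (by positivity)).2 h1
    rw [Real.log_mul (Real.exp_ne_zero _) (ne_of_gt hz0), Real.log_exp] at h2
    have h3 : 3 / μ ≤ Real.log z - Real.log (y + δ * z) := by linarith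
    calc (1:ℝ) = (3 / μ) * (μ / 3) := by field_simp
      _ ≤ (Real.log z - Real.log (y + δ * z)) * (μ / 3) :=
          mul_le_mul_of_nonneg_right h3 hμ3.le
  · rintro z ⟨hz0, hz1⟩ y hzy
    show ss ((Real.log z - Real.log (y + δ * z)) * (μ / 3)) = 0
    apply ss_eq_zero
    have h1 : Real.log z ≤ Real.log (y + δ * z) :=
      (Real.log_le_log_iff hz0 (by nlinarith)).2 (by nlinarith)
    exact mul_nonpos_of_nonpos_of_nonneg (by linarith) hμ3.le
  · rintro z ⟨hz0, hz1⟩ y hy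
    have hx : 0 < y + δ * z := by nlinarith
    have d1 : HasDerivAt (fun t : ℝ => t + δ * z) 1 y := (hasDerivAt_id y).add_const _
    have d2 : HasDerivAt (fun t : ℝ => Real.log (t + δ * z)) ((y + δ * z)⁻¹ * 1) y :=
      by have := (Real.hasDerivAt_log (ne_of_gt hx)).comp y d1; exact this
    have d3 : HasDerivAt (fun t : ℝ => (Real.log z - Real.log (t + δ * z)) * (μ / 3))
        (-((y + δ * z)⁻¹ * 1) * (μ / 3)) y := (d2.const_sub _).mul_const _
    have d4 := (ss_hasDerivAt ((Real.log z - Real.log (y + δ * z)) * (μ / 3))).comp y d3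
    rw [show (fun t => (fun p : ℝ × ℝ => ss ((Real.log p.2 - Real.log (p.1 + δ * p.2)) * (μ / 3))) (t, z))
        = (ss ∘ fun t : ℝ => (Real.log z - Real.log (t + δ * z)) * (μ / 3)) from rfl,
      d4.deriv]
    have hinv : (y + δ * z)⁻¹ ≤ y⁻¹ := by
      apply inv_anti₀ hy; nlinarith
    set a := (Real.log z - Real.log (y + δ * z)) * (μ / 3)
    calc |kk a * (-((y + δ * z)⁻¹ * 1) * (μ / 3))|
        = kk a * ((y + δ * z)⁻¹ * (μ / 3)) := by
          rw [abs_mul, abs_of_nonneg (kk_nonneg a), mul_one, abs_mul, abs_neg,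
            abs_of_nonneg (inv_nonneg.2 hx.le), abs_of_nonneg hμ3.le]
      _ ≤ (3/2) * ((y + δ * z)⁻¹ * (μ / 3)) :=
          mul_le_mul_of_nonneg_right (kk_le a) (by positivity)
      _ ≤ (3/2) * (y⁻¹ * (μ / 3)) := by
          apply mul_le_mul_of_nonneg_left _ (by norm_num)
          exact mul_le_mul_of_nonneg_right hinv hμ3.le
      _ = μ / (2 * y) := by field_simp
      _ ≤ μ / y := by rw [div_le_div_iff₀ (by linarith) hy]; nlinarith
  · rintro z ⟨hz0, hz1⟩ y hy
    have hx : 0 < y + δ * z := by nlinarith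
    have d1 : HasDerivAt Real.log z⁻¹ z := Real.hasDerivAt_log (ne_of_gt hz0)
    have d2 : HasDerivAt (fun t : ℝ => y + δ * t) (δ * 1) z :=
      ((hasDerivAt_id z).const_mul δ).const_add y
    have d3 : HasDerivAt (fun t : ℝ => Real.log (y + δ * t)) ((y + δ * z)⁻¹ * (δ * 1)) z :=
      by have := (Real.hasDerivAt_log (ne_of_gt hx)).comp z d2; exact this
    have d4 : HasDerivAt (fun t : ℝ => (Real.log t - Real.log (y + δ * t)) * (μ / 3))
        ((z⁻¹ - (y + δ * z)⁻¹ * (δ * 1)) * (μ / 3)) z := (d1.sub d3).mul_const _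
    have d5 := (ss_hasDerivAt ((Real.log z - Real.log (y + δ * z)) * (μ / 3))).comp z d4
    rw [show (fun t => (fun p : ℝ × ℝ => ss ((Real.log p.2 - Real.log (p.1 + δ * p.2)) * (μ / 3))) (y, t))
        = (ss ∘ fun t : ℝ => (Real.log t - Real.log (y + δ * t)) * (μ / 3)) from rfl,
      d5.deriv]
    set a := (Real.log z - Real.log (y + δ * z)) * (μ / 3)
    have hw0 : 0 ≤ (y + δ * z)⁻¹ * (δ * 1) := by positivity
    have hw1 : (y + δ * z)⁻¹ * (δ * 1) ≤ z⁻¹ := by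
      have h1 : (y + δ * z)⁻¹ ≤ (δ * z)⁻¹ := inv_anti₀ (by positivity) (by linarith)
      have h2 : (δ * z)⁻¹ * δ = z⁻¹ := by
        rw [mul_inv]; field_simp
      calc (y + δ * z)⁻¹ * (δ * 1) = (y + δ * z)⁻¹ * δ := by ring
        _ ≤ (δ * z)⁻¹ * δ := mul_le_mul_of_nonneg_right h1 hδ0.le
        _ = z⁻¹ := h2
    have hzinv : 0 < z⁻¹ := inv_pos.2 hz0
    have hin : |(z⁻¹ - (y + δ * z)⁻¹ * (δ * 1)) * (μ / 3)| ≤ (2 * z⁻¹) * (μ / 3) := by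
      rw [abs_mul, abs_of_nonneg hμ3.le]
      apply mul_le_mul_of_nonneg_right _ hμ3.le
      rw [abs_le]
      constructor <;> nlinarith
    calc |kk a * ((z⁻¹ - (y + δ * z)⁻¹ * (δ * 1)) * (μ / 3))|
        ≤ (3/2) * ((2 * z⁻¹) * (μ / 3)) := by
          rw [abs_mul, abs_of_nonneg (kk_nonneg a)]
          exact mul_le_mul (kk_le a) hin (abs_nonneg _) (by norm_num)
      _ = μ / z := by rw [div_eq_mul_inv]; ring
      _ ≤ 4 + μ / z := by linarith
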